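/- Let G be a split graph whose vertex set is partitioned into four ordered sets X_1, X_2, X_3, X_4 of size k, where X_1 ∪ X_3 is a clique, X_2 ∪ X_4 is a stable set, and the triples (G, X_1, X_2), (G, X_2, X_3), (G, X_3, X_4) are regular crossings while (G, X_4, X_1) is an expanding crossing. Then G has Dilworth number at most 2. -/
import Mathlib


/-- Let `G` be a split graph whose vertex set is partitioned into four ordered
sets `X_1, X_2, X_3, X_4` of size `k`, where `X_1 ∪ X_3` is a clique,
`X_2 ∪ X_4` is a stable set, the triples `(G,X_1,X_2)`, `(G,X_2,X_3)`,
`(G,X_3,X_4)` are regular crossings (1-based: edge iff `j + j' ≥ k+1`) and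
`(G,X_4,X_1)` is an expanding crossing (1-based: edge iff `2j + j' ≥ 2k+2`).
Then `G` has Dilworth number at most 2. -/
theorem stmt17 {V : Type*} [Fintype V] [DecidableEq V] (G : SimpleGraph V) (k : ℕ)
    (x₁ x₂ x₃ x₄ : Fin k → V)
    (h₁ : Function.Injective x₁) (h₂ : Function.Injective x₂)
    (h₃ : Function.Injective x₃) (h₄ : Function.Injective x₄)
    (hd₁₂ : Disjoint (Set.range x₁) (Set.range x₂))
    (hd₁₃ : Disjoint (Set.range x₁) (Set.range x₃))
    (hd₁₄ : Disjoint (Set.range x₁) (Set.range x₄))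
    (hd₂₃ : Disjoint (Set.range x₂) (Set.range x₃))
    (hd₂₄ : Disjoint (Set.range x₂) (Set.range x₄))
    (hd₃₄ : Disjoint (Set.range x₃) (Set.range x₄))
    (hcover : Set.range x₁ ∪ Set.range x₂ ∪ Set.range x₃ ∪ Set.range x₄ = Set.univ)
    (hclique : G.IsClique (Set.range x₁ ∪ Set.range x₃))
    (hstable : ∀ a ∈ Set.range x₂ ∪ Set.range x₄, ∀ b ∈ Set.range x₂ ∪ Set.range x₄,
      ¬ G.Adj a b)
    (hc₁₂ : ∀ p q : Fin k, G.Adj (x₁ p) (x₂ q) ↔ k ≤ (p : ℕ) + (q : ℕ) + 1)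
    (hc₂₃ : ∀ p q : Fin k, G.Adj (x₂ p) (x₃ q) ↔ k ≤ (p : ℕ) + (q : ℕ) + 1)
    (hc₃₄ : ∀ p q : Fin k, G.Adj (x₃ p) (x₄ q) ↔ k ≤ (p : ℕ) + (q : ℕ) + 1)
    (hc₄₁ : ∀ p q : Fin k, G.Adj (x₄ p) (x₁ q) ↔ 2 * k + 2 ≤ 2 * ((p : ℕ) + 1) + ((q : ℕ) + 1)) :
    ∀ D : Finset V,
      (∀ a ∈ D, ∀ b ∈ D, a ≠ b →
        (G.neighborSet a \ insert b (G.neighborSet b)).Nonempty ∧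
        (G.neighborSet b \ insert a (G.neighborSet a)).Nonempty) →
      D.card ≤ 2 := by
  classical
  intro D hD
  have hcov : ∀ v : V, (∃ q, x₁ q = v) ∨ (∃ q, x₂ q = v) ∨ (∃ q, x₃ q = v) ∨ (∃ q, x₄ q = v) := by
    intro v
    have hv : v ∈ Set.range x₁ ∪ Set.range x₂ ∪ Set.range x₃ ∪ Set.range x₄ := by
      rw [hcover]; trivial
    simpa [Set.mem_union, Set.mem_range, or_assoc] using hv
  have hcl : ∀ (a b : V), a ∈ Set.range x₁ ∪ Set.range x₃ → b ∈ Set.range x₁ ∪ Set.range x₃ →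
      a ≠ b → G.Adj a b := fun a b ha hb hne => hclique ha hb hne
  have ne₁₃ : ∀ p q : Fin k, x₁ p ≠ x₃ q := fun p q h =>
    Set.disjoint_left.mp hd₁₃ ⟨p, rfl⟩ ⟨q, h.symm⟩
  have ne₃₁ : ∀ p q : Fin k, x₃ p ≠ x₁ q := fun p q h => ne₁₃ q p h.symm
  -- monotone within X₁
  have m1 : ∀ p p' : Fin k, (p : ℕ) ≤ (p' : ℕ) →
      G.neighborSet (x₁ p) ⊆ insert (x₁ p') (G.neighborSet (x₁ p')) := by
    intro p p' hpp v hv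
    rw [SimpleGraph.mem_neighborSet] at hv
    rcases hcov v with ⟨q, rfl⟩ | ⟨q, rfl⟩ | ⟨q, rfl⟩ | ⟨q, rfl⟩
    · by_cases hq : x₁ q = x₁ p'
      · exact hq ▸ Set.mem_insert _ _
      · exact Set.mem_insert_of_mem _
          (hcl (x₁ p') (x₁ q) (Or.inl ⟨p', rfl⟩) (Or.inl ⟨q, rfl⟩) (fun h => hq h.symm))
    · have h0 := (hc₁₂ p q).mp hv
      exact Set.mem_insert_of_mem _ ((hc₁₂ p' q).mpr (by omega))
    · exact Set.mem_insert_of_mem _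
        (hcl (x₁ p') (x₃ q) (Or.inl ⟨p', rfl⟩) (Or.inr ⟨q, rfl⟩) (ne₁₃ p' q))
    · have h0 := (hc₄₁ q p).mp hv.symm
      exact Set.mem_insert_of_mem _ ((hc₄₁ q p').mpr (by omega)).symm
  -- monotone within X₂
  have m2 : ∀ p p' : Fin k, (p : ℕ) ≤ (p' : ℕ) →
      G.neighborSet (x₂ p) ⊆ insert (x₂ p') (G.neighborSet (x₂ p')) := by
    intro p p' hpp v hv
    rw [SimpleGraph.mem_neighborSet] at hv
    rcases hcov v with ⟨q, rfl⟩ | ⟨q, rfl⟩ | ⟨q, rfl⟩ | ⟨q, rfl⟩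
    · have h0 := (hc₁₂ q p).mp hv.symm
      exact Set.mem_insert_of_mem _ ((hc₁₂ q p').mpr (by omega)).symm
    · exact absurd hv (hstable _ (Or.inl ⟨p, rfl⟩) _ (Or.inl ⟨q, rfl⟩))
    · have h0 := (hc₂₃ p q).mp hv
      exact Set.mem_insert_of_mem _ ((hc₂₃ p' q).mpr (by omega))
    · exact absurd hv (hstable _ (Or.inl ⟨p, rfl⟩) _ (Or.inr ⟨q, rfl⟩))
  -- X₂ neighborhoods contained in X₁ closed neighborhoods
  have c21 : ∀ p p' : Fin k,
      G.neighborSet (x₂ p) ⊆ insert (x₁ p') (G.neighborSet (x₁ p')) := by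
    intro p p' v hv
    rw [SimpleGraph.mem_neighborSet] at hv
    rcases hcov v with ⟨q, rfl⟩ | ⟨q, rfl⟩ | ⟨q, rfl⟩ | ⟨q, rfl⟩
    · by_cases hq : x₁ q = x₁ p'
      · exact hq ▸ Set.mem_insert _ _
      · exact Set.mem_insert_of_mem _
          (hcl (x₁ p') (x₁ q) (Or.inl ⟨p', rfl⟩) (Or.inl ⟨q, rfl⟩) (fun h => hq h.symm))
    · exact absurd hv (hstable _ (Or.inl ⟨p, rfl⟩) _ (Or.inl ⟨q, rfl⟩))
    · exact Set.mem_insert_of_mem _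
        (hcl (x₁ p') (x₃ q) (Or.inl ⟨p', rfl⟩) (Or.inr ⟨q, rfl⟩) (ne₁₃ p' q))
    · exact absurd hv (hstable _ (Or.inl ⟨p, rfl⟩) _ (Or.inr ⟨q, rfl⟩))
  -- monotone within X₃
  have m3 : ∀ p p' : Fin k, (p : ℕ) ≤ (p' : ℕ) →
      G.neighborSet (x₃ p) ⊆ insert (x₃ p') (G.neighborSet (x₃ p')) := by
    intro p p' hpp v hv
    rw [SimpleGraph.mem_neighborSet] at hv
    rcases hcov v with ⟨q, rfl⟩ | ⟨q, rfl⟩ | ⟨q, rfl⟩ | ⟨q, rfl⟩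
    · exact Set.mem_insert_of_mem _
        (hcl (x₃ p') (x₁ q) (Or.inr ⟨p', rfl⟩) (Or.inl ⟨q, rfl⟩) (ne₃₁ p' q))
    · have h0 := (hc₂₃ q p).mp hv.symm
      exact Set.mem_insert_of_mem _ ((hc₂₃ q p').mpr (by omega)).symm
    · by_cases hq : x₃ q = x₃ p'
      · exact hq ▸ Set.mem_insert _ _
      · exact Set.mem_insert_of_mem _
          (hcl (x₃ p') (x₃ q) (Or.inr ⟨p', rfl⟩) (Or.inr ⟨q, rfl⟩) (fun h => hq h.symm))
    · have h0 := (hc₃₄ p q).mp hv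
      exact Set.mem_insert_of_mem _ ((hc₃₄ p' q).mpr (by omega))
  -- monotone within X₄
  have m4 : ∀ p p' : Fin k, (p : ℕ) ≤ (p' : ℕ) →
      G.neighborSet (x₄ p) ⊆ insert (x₄ p') (G.neighborSet (x₄ p')) := by
    intro p p' hpp v hv
    rw [SimpleGraph.mem_neighborSet] at hv
    rcases hcov v with ⟨q, rfl⟩ | ⟨q, rfl⟩ | ⟨q, rfl⟩ | ⟨q, rfl⟩
    · have h0 := (hc₄₁ p q).mp hv
      exact Set.mem_insert_of_mem _ ((hc₄₁ p' q).mpr (by omega))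
    · exact absurd hv (hstable _ (Or.inr ⟨p, rfl⟩) _ (Or.inl ⟨q, rfl⟩))
    · have h0 := (hc₃₄ q p).mp hv.symm
      exact Set.mem_insert_of_mem _ ((hc₃₄ q p').mpr (by omega)).symm
    · exact absurd hv (hstable _ (Or.inr ⟨p, rfl⟩) _ (Or.inr ⟨q, rfl⟩))
  -- X₄ neighborhoods contained in X₃ closed neighborhoods
  have c43 : ∀ p p' : Fin k,
      G.neighborSet (x₄ p) ⊆ insert (x₃ p') (G.neighborSet (x₃ p')) := by
    intro p p' v hv
    rw [SimpleGraph.mem_neighborSet] at hv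
    rcases hcov v with ⟨q, rfl⟩ | ⟨q, rfl⟩ | ⟨q, rfl⟩ | ⟨q, rfl⟩
    · exact Set.mem_insert_of_mem _
        (hcl (x₃ p') (x₁ q) (Or.inr ⟨p', rfl⟩) (Or.inl ⟨q, rfl⟩) (ne₃₁ p' q))
    · exact absurd hv (hstable _ (Or.inr ⟨p, rfl⟩) _ (Or.inl ⟨q, rfl⟩))
    · by_cases hq : x₃ q = x₃ p'
      · exact hq ▸ Set.mem_insert _ _
      · exact Set.mem_insert_of_mem _
          (hcl (x₃ p') (x₃ q) (Or.inr ⟨p', rfl⟩) (Or.inr ⟨q, rfl⟩) (fun h => hq h.symm))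
    · exact absurd hv (hstable _ (Or.inr ⟨p, rfl⟩) _ (Or.inr ⟨q, rfl⟩))
  -- comparability on each half
  have key1 : ∀ a ∈ Set.range x₁ ∪ Set.range x₂, ∀ b ∈ Set.range x₁ ∪ Set.range x₂,
      G.neighborSet a ⊆ insert b (G.neighborSet b) ∨
      G.neighborSet b ⊆ insert a (G.neighborSet a) := by
    rintro a (⟨p, rfl⟩ | ⟨p, rfl⟩) b (⟨p', rfl⟩ | ⟨p', rfl⟩)
    · rcases le_total (p : ℕ) (p' : ℕ) with h | h
      · exact Or.inl (m1 p p' h)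
      · exact Or.inr (m1 p' p h)
    · exact Or.inr (c21 p' p)
    · exact Or.inl (c21 p p')
    · rcases le_total (p : ℕ) (p' : ℕ) with h | h
      · exact Or.inl (m2 p p' h)
      · exact Or.inr (m2 p' p h)
  have key2 : ∀ a ∈ Set.range x₃ ∪ Set.range x₄, ∀ b ∈ Set.range x₃ ∪ Set.range x₄,
      G.neighborSet a ⊆ insert b (G.neighborSet b) ∨
      G.neighborSet b ⊆ insert a (G.neighborSet a) := by
    rintro a (⟨p, rfl⟩ | ⟨p, rfl⟩) b (⟨p', rfl⟩ | ⟨p', rfl⟩)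
    · rcases le_total (p : ℕ) (p' : ℕ) with h | h
      · exact Or.inl (m3 p p' h)
      · exact Or.inr (m3 p' p h)
    · exact Or.inr (c43 p' p)
    · exact Or.inl (c43 p p')
    · rcases le_total (p : ℕ) (p' : ℕ) with h | h
      · exact Or.inl (m4 p p' h)
      · exact Or.inr (m4 p' p h)
  -- counting
  have hsub : D ⊆ D.filter (· ∈ Set.range x₁ ∪ Set.range x₂) ∪
      D.filter (· ∈ Set.range x₃ ∪ Set.range x₄) := by
    intro v hv
    rcases hcov v with ⟨q, h⟩ | ⟨q, h⟩ | ⟨q, h⟩ | ⟨q, h⟩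
    · exact Finset.mem_union_left _ (Finset.mem_filter.mpr ⟨hv, Or.inl ⟨q, h⟩⟩)
    · exact Finset.mem_union_left _ (Finset.mem_filter.mpr ⟨hv, Or.inr ⟨q, h⟩⟩)
    · exact Finset.mem_union_right _ (Finset.mem_filter.mpr ⟨hv, Or.inl ⟨q, h⟩⟩)
    · exact Finset.mem_union_right _ (Finset.mem_filter.mpr ⟨hv, Or.inr ⟨q, h⟩⟩)
  have hc1 : (D.filter (· ∈ Set.range x₁ ∪ Set.range x₂)).card ≤ 1 := by
    rw [Finset.card_le_one]
    intro a ha b hb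
    by_contra hne
    obtain ⟨haD, haS⟩ := Finset.mem_filter.mp ha
    obtain ⟨hbD, hbS⟩ := Finset.mem_filter.mp hb
    obtain ⟨hn1, hn2⟩ := hD a haD b hbD hne
    rcases key1 a haS b hbS with hs | hs
    · obtain ⟨v, hv1, hv2⟩ := hn1; exact hv2 (hs hv1)
    · obtain ⟨v, hv1, hv2⟩ := hn2; exact hv2 (hs hv1)
  have hc2 : (D.filter (· ∈ Set.range x₃ ∪ Set.range x₄)).card ≤ 1 := by
    rw [Finset.card_le_one]
    intro a ha b hb
    by_contra hne
    obtain ⟨haD, haS⟩ := Finset.mem_filter.mp ha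
    obtain ⟨hbD, hbS⟩ := Finset.mem_filter.mp hb
    obtain ⟨hn1, hn2⟩ := hD a haD b hbD hne
    rcases key2 a haS b hbS with hs | hs
    · obtain ⟨v, hv1, hv2⟩ := hn1; exact hv2 (hs hv1)
    · obtain ⟨v, hv1, hv2⟩ := hn2; exact hv2 (hs hv1)
  calc D.card ≤ _ := Finset.card_le_card hsub
    _ ≤ (D.filter (· ∈ Set.range x₁ ∪ Set.range x₂)).card +
        (D.filter (· ∈ Set.range x₃ ∪ Set.range x₄)).card := Finset.card_union_le _ _
    _ ≤ 2 := by omega
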